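/- For σ > 0 and β > 0 (defocusing case), the charge q(ω) = (-(log(√ω/2)+γ)/(2πβ))^(1/(2σ)) is well-defined and positive for ω ∈ (0, ω̃) with ω̃ = 4e^(-2γ), and the mass M(ω) = q²(ω)/(4πω) is strictly decreasing on (0, ω̃) with range all of (0, +∞); hence for every μ > 0 there is a unique ω_μ ∈ (0, ω̃) with M(ω_μ) = μ. -/

import Mathlib

noncomputable section
open Real Filter Set Topology

/-- The Euler–Mascheroni constant. -/
def euγ : ℝ := Real.eulerMascheroniConstant

/-- The threshold frequency. -/
def ωtilde : ℝ := 4 * Real.exp (-2 * euγ)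

/-- The charge of the standing wave at frequency ω. -/
def charge (σ β ω : ℝ) : ℝ :=
  (-(Real.log (Real.sqrt ω / 2) + euγ) / (2 * π * β)) ^ (1 / (2 * σ))

/-- The inverse change of variables, frequency as a function of the charge. -/
def ωof (σ β q : ℝ) : ℝ := 4 * Real.exp (-2 * euγ - 4 * π * β * q ^ (2 * σ))

/-- Energy of the standing wave as a function of the frequency. -/
def Eω (σ β ω : ℝ) : ℝ :=
  (σ * (Real.log (Real.sqrt ω / 2) + euγ) / (2 * π * (σ + 1)) - 1 / (4 * π)) *
    (-(Real.log (Real.sqrt ω / 2) + euγ) / (2 * π * β)) ^ (1 / σ)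

/-- Energy of the standing wave as a function of the charge. -/
def Echarge (σ β q : ℝ) : ℝ := -q ^ 2 / (4 * π) - σ * β * q ^ (2 * σ + 2) / (σ + 1)

/-- Mass of the standing wave as a function of the frequency. -/
def Mω (σ β ω : ℝ) : ℝ :=
  (1 / (4 * π * ω)) * (-(Real.log (Real.sqrt ω / 2) + euγ) / (2 * π * β)) ^ (1 / σ)

/-- Mass of the standing wave as a function of the charge. -/
def Mq (σ β q : ℝ) : ℝ := q ^ 2 * Real.exp (2 * euγ + 4 * π * β * q ^ (2 * σ)) / (16 * π)

/-- The minimizing charge. -/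
def qbar (σ β : ℝ) : ℝ := (-(4 * π * σ * β)) ^ (-(1 / (2 * σ)) : ℝ)

/-- The blow-up energy threshold. -/
def Λ (σ β : ℝ) : ℝ := -σ / (4 * π * (σ + 1) * (-(4 * π * σ * β)) ^ (1 / σ))

/-- The frequency of minimal energy / maximal mass. -/
def ωbar (σ : ℝ) : ℝ := 4 * Real.exp (-2 * euγ + 1 / σ)

/-- The maximal mass. -/
def μbar (σ β : ℝ) : ℝ :=
  Real.exp (2 * euγ - 1 / σ) / (16 * π * (-(4 * π * σ * β)) ^ (1 / σ))

/-- helper -/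
def G (β ω : ℝ) : ℝ := -(Real.log (Real.sqrt ω / 2) + euγ) / (2 * π * β)

lemma sqrt_ωtilde : Real.sqrt ωtilde = 2 * Real.exp (-euγ) := by
  have h : ωtilde = (2 * Real.exp (-euγ)) ^ 2 := by
    have h2 : Real.exp (-euγ) ^ 2 = Real.exp (-2 * euγ) := by
      rw [sq, ← Real.exp_add]; ring_nf
    rw [ωtilde, mul_pow, h2]; norm_num
  rw [h, Real.sqrt_sq (by positivity)]

lemma ωtilde_pos : 0 < ωtilde := by unfold ωtilde; positivity

lemma log_lt (β : ℝ) {ω : ℝ} (hω : ω ∈ Set.Ioo 0 ωtilde) :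
    Real.log (Real.sqrt ω / 2) < -euγ := by
  have h1 : Real.sqrt ω / 2 < Real.exp (-euγ) := by
    have := Real.sqrt_lt_sqrt hω.1.le hω.2
    rw [sqrt_ωtilde] at this
    linarith
  have h2 : 0 < Real.sqrt ω / 2 := by
    have := Real.sqrt_pos.mpr hω.1; linarith
  calc Real.log (Real.sqrt ω / 2) < Real.log (Real.exp (-euγ)) :=
        Real.log_lt_log h2 h1
    _ = -euγ := Real.log_exp _

lemma G_pos {β : ℝ} (hβ : 0 < β) {ω : ℝ} (hω : ω ∈ Set.Ioo 0 ωtilde) :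
    0 < G β ω := by
  have := log_lt β hω
  have hd : 0 < 2 * π * β := by positivity
  unfold G
  apply div_pos _ hd
  linarith

lemma G_anti {β : ℝ} (hβ : 0 < β) {x y : ℝ} (hx : 0 < x) (hxy : x < y) :
    G β y < G β x := by
  have hs : Real.sqrt x / 2 < Real.sqrt y / 2 := by
    have := Real.sqrt_lt_sqrt hx.le hxy; linarith
  have hl : Real.log (Real.sqrt x / 2) < Real.log (Real.sqrt y / 2) :=
    Real.log_lt_log (by have := Real.sqrt_pos.mpr hx; linarith) hs
  have hd : 0 < 2 * π * β := by positivity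
  unfold G
  rw [div_lt_div_iff_of_pos_right hd]
  linarith

lemma Mω_eq (σ β ω : ℝ) : Mω σ β ω = (1 / (4 * π * ω)) * (G β ω) ^ (1 / σ) := rfl

lemma contG {β : ℝ} : ContinuousOn (G β) (Set.Ioi 0) := by
  unfold G
  apply ContinuousOn.div_const
  apply ContinuousOn.neg
  apply ContinuousOn.add _ continuousOn_const
  intro x hx
  have hx' : (0:ℝ) < Real.sqrt x / 2 := by
    have := Real.sqrt_pos.mpr hx; positivity
  exact (ContinuousAt.log ((Real.continuous_sqrt.div_const 2).continuousAt)
    hx'.ne').continuousWithinAt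

lemma contM {σ β : ℝ} (hσ : 0 < σ) : ContinuousOn (Mω σ β) (Set.Ioi 0) := by
  have h1 : ContinuousOn (fun ω : ℝ => 1 / (4 * π * ω)) (Set.Ioi 0) := by
    apply ContinuousOn.div continuousOn_const (by fun_prop)
    intro x hx
    have : (0:ℝ) < x := hx
    positivity
  exact h1.mul (contG.rpow_const fun x _ => Or.inr (by positivity))

lemma Mω_anti {σ β : ℝ} (hσ : 0 < σ) (hβ : 0 < β) :
    StrictAntiOn (Mω σ β) (Set.Ioo 0 ωtilde) := by
  intro x hx y hy hxy
  rw [Mω_eq, Mω_eq]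
  have hfx : 0 < 1 / (4 * π * x) := by have := hx.1; positivity
  have hfy : 0 < 1 / (4 * π * y) := by have := hy.1; positivity
  have hf : 1 / (4 * π * y) < 1 / (4 * π * x) := by
    apply one_div_lt_one_div_of_lt (by have := hx.1; positivity)
    have : (0:ℝ) < 4 * π := by positivity
    nlinarith [hx.1, hy.1]
  have hGy : 0 < G β y := G_pos hβ hy
  have hG : G β y < G β x := G_anti hβ hx.1 hxy
  have hr : G β y ^ (1 / σ) < G β x ^ (1 / σ) :=
    Real.rpow_lt_rpow hGy.le hG (by positivity)
  have hry : 0 < G β y ^ (1 / σ) := Real.rpow_pos_of_pos hGy _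
  calc 1 / (4 * π * y) * G β y ^ (1 / σ)
      < 1 / (4 * π * x) * G β x ^ (1 / σ) := by
        apply mul_lt_mul'' hf hr hfy.le hry.le

lemma Mω_atTop {σ β : ℝ} (hσ : 0 < σ) (hβ : 0 < β) :
    Tendsto (Mω σ β) (𝓝[>] (0:ℝ)) atTop := by
  have hf : Tendsto (fun ω : ℝ => 1 / (4 * π * ω)) (𝓝[>] (0:ℝ)) atTop := by
    have h1 := tendsto_inv_nhdsGT_zero (𝕜 := ℝ)
    have h2 := (Filter.tendsto_const_mul_atTop_of_pos (r := (4 * π)⁻¹) (by positivity)).mpr h1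
    exact h2.congr fun x => by rw [one_div, mul_inv]; ring
  have hs : Tendsto (fun ω : ℝ => Real.sqrt ω / 2) (𝓝[>] (0:ℝ)) (𝓝[>] (0:ℝ)) := by
    rw [tendsto_nhdsWithin_iff]
    constructor
    · have := ((Real.continuous_sqrt.div_const 2).tendsto 0).mono_left
        (nhdsWithin_le_nhds (s := Set.Ioi (0:ℝ)))
      simpa using this
    · exact eventually_nhdsWithin_of_forall fun x hx => by
        have : (0:ℝ) < Real.sqrt x := Real.sqrt_pos.mpr hx
        have : (0:ℝ) < Real.sqrt x / 2 := by linarith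
        exact this
  have hlog : Tendsto (fun ω : ℝ => Real.log (Real.sqrt ω / 2)) (𝓝[>] (0:ℝ)) atBot :=
    Real.tendsto_log_nhdsGT_zero.comp hs
  have hadd : Tendsto (fun ω : ℝ => Real.log (Real.sqrt ω / 2) + euγ) (𝓝[>] (0:ℝ)) atBot :=
    tendsto_atBot_add_const_right _ euγ hlog
  have hneg : Tendsto (fun ω : ℝ => -(Real.log (Real.sqrt ω / 2) + euγ)) (𝓝[>] (0:ℝ)) atTop :=
    tendsto_neg_atBot_atTop.comp hadd
  have hG : Tendsto (G β) (𝓝[>] (0:ℝ)) atTop :=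
    hneg.atTop_div_const (by positivity)
  have hr : Tendsto (fun ω : ℝ => G β ω ^ (1 / σ)) (𝓝[>] (0:ℝ)) atTop :=
    (tendsto_rpow_atTop (by positivity : (0:ℝ) < 1 / σ)).comp hG
  exact hf.atTop_mul_atTop₀ hr

lemma Mω_ωtilde {σ β : ℝ} (hσ : 0 < σ) : Mω σ β ωtilde = 0 := by
  have h1 : Real.log (Real.sqrt ωtilde / 2) = -euγ := by
    rw [sqrt_ωtilde]
    rw [show (2 : ℝ) * Real.exp (-euγ) / 2 = Real.exp (-euγ) by ring, Real.log_exp]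
  rw [Mω, h1]
  rw [show -(-euγ + euγ) / (2 * π * β) = 0 by ring, Real.zero_rpow (by positivity), mul_zero]

theorem stmt14 (σ β : ℝ) (hσ : 0 < σ) (hβ : 0 < β) :
    (∀ ω ∈ Set.Ioo 0 ωtilde, 0 < charge σ β ω) ∧
    StrictAntiOn (Mω σ β) (Set.Ioo 0 ωtilde) ∧
    (∀ μ > 0, ∃! ω, ω ∈ Set.Ioo 0 ωtilde ∧ Mω σ β ω = μ) := by
  refine ⟨?_, Mω_anti hσ hβ, ?_⟩
  · intro ω hω
    exact Real.rpow_pos_of_pos (G_pos hβ hω) _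
  · intro μ hμ
    have hcont : ContinuousAt (Mω σ β) ωtilde :=
      (contM hσ).continuousAt (Ioi_mem_nhds ωtilde_pos)
    have hne : (𝓝[Set.Ioo 0 ωtilde] ωtilde).NeBot := by
      rw [← mem_closure_iff_nhdsWithin_neBot, closure_Ioo ωtilde_pos.ne]
      exact ⟨ωtilde_pos.le, le_refl _⟩
    have h0 : Tendsto (Mω σ β) (𝓝[Set.Ioo 0 ωtilde] ωtilde) (𝓝 0) := by
      rw [← Mω_ωtilde (σ := σ) (β := β) hσ]
      exact hcont.continuousWithinAt
    obtain ⟨b, hbμ, hb⟩ := ((h0.eventually (gt_mem_nhds hμ)).and self_mem_nhdsWithin).exists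
    have hT := Mω_atTop (σ := σ) (β := β) hσ hβ
    have hmem : ∀ᶠ x in 𝓝[>] (0:ℝ), x ∈ Set.Ioo 0 ωtilde :=
      eventually_mem_set.mpr (Ioo_mem_nhdsGT ωtilde_pos)
    obtain ⟨a, haμ, ha⟩ := ((hT.eventually (eventually_gt_atTop μ)).and hmem).exists
    have hab : a < b := by
      rcases lt_trichotomy a b with h | rfl | h
      · exact h
      · linarith
      · have := Mω_anti hσ hβ hb ha h
        linarith
    have hsub : Set.Icc a b ⊆ Set.Ioi 0 := fun x hx => lt_of_lt_of_le ha.1 hx.1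
    have hIV := intermediate_value_Icc' hab.le ((contM (β := β) hσ).mono hsub)
    obtain ⟨c, hc, hcμ⟩ := hIV ⟨hbμ.le, haμ.le⟩
    have hcIoo : c ∈ Set.Ioo 0 ωtilde := ⟨lt_of_lt_of_le ha.1 hc.1, lt_of_le_of_lt hc.2 hb.2⟩
    refine ⟨c, ⟨hcIoo, hcμ⟩, ?_⟩
    rintro y ⟨hy, hyμ⟩
    exact (Mω_anti hσ hβ).injOn hy hcIoo (by rw [hyμ, hcμ])
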